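/- (Equivocation bound via Charlie's rate.) Let (A_i, C_i, E_i), i = 1,…,N, be i.i.d. finite-valued triples with pmf p_{ACE}, and let J = f_A(A^N) and K = f_C(C^N) be arbitrary functions of the blocks A^N and C^N respectively. Then H(A^N | J, E^N) + N·H(C|A) ≤ H(A^N, C^N | J, K) + H(K), where H(C|A) is the single-letter conditional entropy of C given A under p_{ACE}. -/

import Mathlib

open scoped BigOperators

noncomputable section

namespace SSW

/-- Probability that the random variable `X` takes the value `x`, under the pmf `p`. -/
def pr {Ω α : Type*} [Fintype Ω] (p : Ω → ℝ) (X : Ω → α) (x : α) : ℝ :=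
  ∑ ω, @ite _ (X ω = x) (Classical.propDecidable _) (p ω) 0

/-- Probability of the event `s` under the pmf `p`. -/
def prE {Ω : Type*} [Fintype Ω] (p : Ω → ℝ) (s : Ω → Prop) : ℝ :=
  ∑ ω, @ite _ (s ω) (Classical.propDecidable _) (p ω) 0

/-- Shannon entropy (base 2) of the random variable `X` under the pmf `p`. -/
def H {Ω α : Type*} [Fintype Ω] [Fintype α] (p : Ω → ℝ) (X : Ω → α) : ℝ :=
  ∑ x, -(pr p X x * Real.logb 2 (pr p X x))

/-- Conditional Shannon entropy `H(X|Y) = H(X,Y) - H(Y)` (base 2). -/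
def Hc {Ω α β : Type*} [Fintype Ω] [Fintype α] [Fintype β]
    (p : Ω → ℝ) (X : Ω → α) (Y : Ω → β) : ℝ :=
  H p (fun ω => (X ω, Y ω)) - H p Y

/-- Mutual information `I(X;Y) = H(X) + H(Y) - H(X,Y)` (base 2). -/
def MI {Ω α β : Type*} [Fintype Ω] [Fintype α] [Fintype β]
    (p : Ω → ℝ) (X : Ω → α) (Y : Ω → β) : ℝ :=
  H p X + H p Y - H p (fun ω => (X ω, Y ω))

/-- Conditional mutual information `I(X;Y|Z) = H(X|Z) - H(X|Y,Z)` (base 2). -/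
def cMI {Ω α β γ : Type*} [Fintype Ω] [Fintype α] [Fintype β] [Fintype γ]
    (p : Ω → ℝ) (X : Ω → α) (Y : Ω → β) (Z : Ω → γ) : ℝ :=
  Hc p X Z - Hc p X (fun ω => (Y ω, Z ω))

/-- `p` is a probability mass function on the finite type `Ω`. -/
def IsPMF {Ω : Type*} [Fintype Ω] (p : Ω → ℝ) : Prop :=
  (∀ ω, 0 ≤ p ω) ∧ ∑ ω, p ω = 1

/-- The Markov chain `X − Y − Z`: `X` and `Z` are conditionally independent given `Y`. -/
def Markov {Ω α β γ : Type*} [Fintype Ω] (p : Ω → ℝ)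
    (X : Ω → α) (Y : Ω → β) (Z : Ω → γ) : Prop :=
  ∀ x y z,
    pr p (fun ω => (X ω, Y ω, Z ω)) (x, y, z) * pr p Y y =
      pr p (fun ω => (X ω, Y ω)) (x, y) * pr p (fun ω => (Y ω, Z ω)) (y, z)

/-- `k` is a conditional probability kernel from `α` to `β`. -/
def IsKernel {α β : Type*} [Fintype β] (k : α → β → ℝ) : Prop :=
  ∀ a, (∀ b, 0 ≤ k a b) ∧ ∑ b, k a b = 1

/-- The i.i.d. block pmf on `Fin N → S` induced by the single-letter pmf `p` on `S`. -/
def blk {S : Type*} [Fintype S] (N : ℕ) (p : S → ℝ) : (Fin N → S) → ℝ :=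
  fun ω => ∏ i, p (ω i)

end SSW

open SSW

namespace SSWProof

noncomputable def F (x : ℝ) : ℝ := -(x * Real.logb 2 x)

lemma F_zero : F 0 = 0 := by simp [F]

lemma F_mul (x y : ℝ) : F (x * y) = y * F x + x * F y := by
  rcases eq_or_ne x 0 with rfl | hx
  · simp [F]
  rcases eq_or_ne y 0 with rfl | hy
  · simp [F]
  · simp only [F]; rw [Real.logb_mul hx hy]; ring

variable {Ω α β γ : Type*} [Fintype Ω]

lemma H_eq [Fintype α] (p : Ω → ℝ) (X : Ω → α) : H p X = ∑ x, F (pr p X x) := rfl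

lemma pr_nonneg (p : Ω → ℝ) (hp : ∀ ω, 0 ≤ p ω) (X : Ω → α) (x : α) : 0 ≤ pr p X x :=
  Finset.sum_nonneg fun ω _ => by split_ifs; exacts [hp ω, le_rfl]

lemma sum_pr [Fintype α] (p : Ω → ℝ) (X : Ω → α) : ∑ x, pr p X x = ∑ ω, p ω := by
  unfold pr
  rw [Finset.sum_comm]
  refine Finset.sum_congr rfl fun ω _ => ?_
  rw [Finset.sum_eq_single_of_mem (X ω) (Finset.mem_univ _)
    (fun x _ hx => if_neg fun h => hx h.symm), if_pos rfl]

lemma marg_right [Fintype α] [Fintype β] (p : Ω → ℝ) (U : Ω → α) (V : Ω → β) (a : α) :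
    ∑ b, pr p (fun ω => (U ω, V ω)) (a, b) = pr p U a := by
  unfold pr
  rw [Finset.sum_comm]
  refine Finset.sum_congr rfl fun ω _ => ?_
  rw [Finset.sum_eq_single_of_mem (V ω) (Finset.mem_univ _)
    (fun b _ hb => if_neg fun h => hb (congrArg Prod.snd h).symm)]
  by_cases h : U ω = a
  · rw [if_pos (by simp [h]), if_pos h]
  · rw [if_neg fun hh => h (congrArg Prod.fst hh), if_neg h]

lemma marg_left [Fintype α] [Fintype β] (p : Ω → ℝ) (U : Ω → α) (V : Ω → β) (b : β) :
    ∑ a, pr p (fun ω => (U ω, V ω)) (a, b) = pr p V b := by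
  unfold pr
  rw [Finset.sum_comm]
  refine Finset.sum_congr rfl fun ω _ => ?_
  rw [Finset.sum_eq_single_of_mem (U ω) (Finset.mem_univ _)
    (fun a _ ha => if_neg fun h => ha (congrArg Prod.fst h).symm)]
  by_cases h : V ω = b
  · rw [if_pos (by simp [h]), if_pos h]
  · rw [if_neg fun hh => h (congrArg Prod.snd hh), if_neg h]

lemma pr_comp {g : α → β} (p : Ω → ℝ) (hg : Function.Injective g) (X : Ω → α) (x : α) :
    pr p (fun ω => g (X ω)) (g x) = pr p X x := by
  unfold pr
  refine Finset.sum_congr rfl fun ω _ => ?_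
  by_cases h : X ω = x
  · rw [if_pos (by simp [h]), if_pos h]
  · rw [if_neg fun hh => h (hg hh), if_neg h]

lemma H_comp [Fintype α] [Fintype β] {g : α → β} (p : Ω → ℝ) (hg : Function.Injective g)
    (X : Ω → α) : H p (fun ω => g (X ω)) = H p X := by
  classical
  have hz : ∀ y ∈ Finset.univ, y ∉ Finset.univ.image g →
      F (pr p (fun ω => g (X ω)) y) = 0 := by
    intro y _ hy
    have h0 : pr p (fun ω => g (X ω)) y = 0 :=
      Finset.sum_eq_zero fun ω _ => if_neg fun h =>
        hy (Finset.mem_image.2 ⟨X ω, Finset.mem_univ _, h⟩)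
    rw [h0, F_zero]
  rw [H_eq, H_eq, ← Finset.sum_subset (Finset.subset_univ (Finset.univ.image g)) hz,
    Finset.sum_image (fun a _ b _ h => hg h)]
  exact Finset.sum_congr rfl fun x _ => by rw [pr_comp p hg]

lemma pr_pair_le_left [Fintype α] [Fintype β] (p : Ω → ℝ) (hp : ∀ ω, 0 ≤ p ω) (U : Ω → α) (V : Ω → β)
    (a : α) (b : β) : pr p (fun ω => (U ω, V ω)) (a, b) ≤ pr p U a := by
  rw [← marg_right p U V a]
  exact Finset.single_le_sum (f := fun b => pr p (fun ω => (U ω, V ω)) (a, b))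
    (fun b _ => pr_nonneg p hp _ _) (Finset.mem_univ b)

lemma pr_pair_le_right [Fintype α] [Fintype β] (p : Ω → ℝ) (hp : ∀ ω, 0 ≤ p ω) (U : Ω → α) (V : Ω → β)
    (a : α) (b : β) : pr p (fun ω => (U ω, V ω)) (a, b) ≤ pr p V b := by
  rw [← marg_left p U V b]
  exact Finset.single_le_sum (f := fun a => pr p (fun ω => (U ω, V ω)) (a, b))
    (fun a _ => pr_nonneg p hp _ _) (Finset.mem_univ a)

lemma gibbs {ι : Type*} [Fintype ι] (r q : ι → ℝ) (hr0 : ∀ i, 0 ≤ r i) (hr1 : ∑ i, r i = 1)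
    (hq0 : ∀ i, 0 ≤ q i) (hq1 : ∑ i, q i ≤ 1) (hsupp : ∀ i, 0 < r i → 0 < q i) :
    ∑ i, F (r i) ≤ ∑ i, -(r i * Real.logb 2 (q i)) := by
  have hlog2 : 0 < Real.log 2 := Real.log_pos one_lt_two
  have key : ∀ i, r i * Real.log (q i) - r i * Real.log (r i) ≤ q i - r i := by
    intro i
    rcases eq_or_lt_of_le (hr0 i) with h | h
    · rw [← h]; simpa using hq0 i
    · have hqi := hsupp i h
      have hle := Real.log_le_sub_one_of_pos (div_pos hqi h)
      rw [Real.log_div hqi.ne' h.ne'] at hle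
      have h2 := mul_le_mul_of_nonneg_left hle h.le
      rw [mul_sub, mul_sub, mul_div_cancel₀ _ h.ne', mul_one] at h2
      linarith
  have hsum : ∑ i, (r i * Real.log (q i) - r i * Real.log (r i)) ≤ 0 := by
    calc ∑ i, (r i * Real.log (q i) - r i * Real.log (r i)) ≤ ∑ i, (q i - r i) :=
          Finset.sum_le_sum fun i _ => key i
      _ = (∑ i, q i) - ∑ i, r i := Finset.sum_sub_distrib _ _
      _ ≤ 0 := by rw [hr1]; linarith
  rw [← sub_nonneg, ← Finset.sum_sub_distrib]
  have step : ∀ i ∈ Finset.univ, -(r i * Real.logb 2 (q i)) - F (r i)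
      = (r i * Real.log (r i) - r i * Real.log (q i)) / Real.log 2 := by
    intro i _; simp only [F, Real.logb]; ring
  rw [Finset.sum_congr rfl step, ← Finset.sum_div]
  apply div_nonneg _ hlog2.le
  have : ∑ i, (r i * Real.log (r i) - r i * Real.log (q i))
      = -∑ i, (r i * Real.log (q i) - r i * Real.log (r i)) := by
    rw [← Finset.sum_neg_distrib]
    exact Finset.sum_congr rfl fun i _ => by ring
  rw [this]; linarith


lemma sum_pr_one [Fintype α] {p : Ω → ℝ} (hp : IsPMF p) (X : Ω → α) : ∑ x, pr p X x = 1 := by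
  rw [sum_pr]; exact hp.2

lemma subadd [Fintype α] [Fintype β] (p : Ω → ℝ) (hp : IsPMF p) (X : Ω → α) (Y : Ω → β) :
    H p (fun ω => (X ω, Y ω)) ≤ H p X + H p Y := by
  classical
  set r : α × β → ℝ := pr p (fun ω => (X ω, Y ω)) with hrdef
  have hr0 : ∀ t, 0 ≤ r t := fun t => pr_nonneg p hp.1 _ t
  have hsupp : ∀ t : α × β, 0 < r t → 0 < pr p X t.1 ∧ 0 < pr p Y t.2 := by
    intro t ht
    obtain ⟨a, b⟩ := t
    exact ⟨lt_of_lt_of_le ht (pr_pair_le_left p hp.1 X Y a b),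
           lt_of_lt_of_le ht (pr_pair_le_right p hp.1 X Y a b)⟩
  have hq1 : ∑ t : α × β, pr p X t.1 * pr p Y t.2 = 1 := by
    rw [Fintype.sum_prod_type]
    have h1 : ∀ a, ∑ b, pr p X a * pr p Y b = pr p X a := by
      intro a; rw [← Finset.mul_sum, sum_pr_one hp, mul_one]
    rw [Finset.sum_congr rfl fun a _ => h1 a, sum_pr_one hp]
  have hg := gibbs r (fun t => pr p X t.1 * pr p Y t.2) hr0 (sum_pr_one hp _)
    (fun t => mul_nonneg (pr_nonneg p hp.1 _ _) (pr_nonneg p hp.1 _ _))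
    (le_of_eq hq1)
    (fun t ht => mul_pos (hsupp t ht).1 (hsupp t ht).2)
  have hsplit : ∑ t : α × β, -(r t * Real.logb 2 (pr p X t.1 * pr p Y t.2))
      = (∑ t : α × β, -(r t * Real.logb 2 (pr p X t.1)))
        + ∑ t : α × β, -(r t * Real.logb 2 (pr p Y t.2)) := by
    rw [← Finset.sum_add_distrib]
    refine Finset.sum_congr rfl fun t _ => ?_
    rcases eq_or_lt_of_le (hr0 t) with h | h
    · rw [← h]; ring
    · obtain ⟨h1, h2⟩ := hsupp t h
      rw [Real.logb_mul h1.ne' h2.ne']; ring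
  have hX : ∑ t : α × β, -(r t * Real.logb 2 (pr p X t.1)) = H p X := by
    rw [Fintype.sum_prod_type, H_eq]
    refine Finset.sum_congr rfl fun a _ => ?_
    rw [show (∑ b, -(r (a, b) * Real.logb 2 (pr p X a)))
        = -((∑ b, r (a, b)) * Real.logb 2 (pr p X a)) by
      rw [Finset.sum_mul, ← Finset.sum_neg_distrib]]
    rw [hrdef, marg_right p X Y a]
    rfl
  have hY : ∑ t : α × β, -(r t * Real.logb 2 (pr p Y t.2)) = H p Y := by
    rw [Fintype.sum_prod_type_right, H_eq]
    refine Finset.sum_congr rfl fun b _ => ?_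
    rw [show (∑ a, -(r (a, b) * Real.logb 2 (pr p Y b)))
        = -((∑ a, r (a, b)) * Real.logb 2 (pr p Y b)) by
      rw [Finset.sum_mul, ← Finset.sum_neg_distrib]]
    rw [hrdef, marg_left p X Y b]
    rfl
  calc H p (fun ω => (X ω, Y ω)) = ∑ t : α × β, F (r t) := by rw [H_eq, hrdef]
    _ ≤ ∑ t : α × β, -(r t * Real.logb 2 (pr p X t.1 * pr p Y t.2)) := hg
    _ = H p X + H p Y := by rw [hsplit, hX, hY]


lemma blk_sum {S : Type*} [Fintype S] (p : S → ℝ) (N : ℕ) :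
    ∑ ω : Fin N → S, ∏ i, p (ω i) = ∏ _i : Fin N, ∑ s, p s := by
  classical
  rw [Finset.prod_univ_sum]
  rw [Fintype.piFinset_univ]

lemma blk_pmf {S : Type*} [Fintype S] {p : S → ℝ} (hp : IsPMF p) (N : ℕ) :
    IsPMF (blk N p) := by
  constructor
  · exact fun ω => Finset.prod_nonneg fun i _ => hp.1 _
  · show ∑ ω : Fin N → S, ∏ i, p (ω i) = 1
    rw [blk_sum, hp.2]; simp

lemma pr_blk {S T : Type*} [Fintype S] [Fintype T] (p : S → ℝ) (g : S → T) (N : ℕ)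
    (v : Fin N → T) :
    pr (blk N p) (fun ω => fun i => g (ω i)) v = ∏ i, pr p g (v i) := by
  classical
  unfold pr blk
  rw [show (∏ i, ∑ s, @ite _ (g s = v i) (Classical.propDecidable _) (p s) 0)
      = ∑ ω ∈ Fintype.piFinset (fun _ : Fin N => (Finset.univ : Finset S)),
        ∏ i, @ite _ (g (ω i) = v i) (Classical.propDecidable _) (p (ω i)) 0 from
    Finset.prod_univ_sum _ _]
  rw [Fintype.piFinset_univ]
  refine Finset.sum_congr rfl fun ω _ => ?_
  by_cases h : ∀ i, g (ω i) = v i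
  · rw [if_pos (funext h)]
    exact (Finset.prod_congr rfl fun i _ => if_pos (h i)).symm
  · push_neg at h
    obtain ⟨i, hi⟩ := h
    rw [if_neg (fun hh => hi (congrFun hh i))]
    refine (Finset.prod_eq_zero (Finset.mem_univ i) ?_).symm
    exact if_neg hi

lemma sum_F_prod {T : Type*} [Fintype T] {q : T → ℝ} (hq : (∀ t, 0 ≤ q t) ∧ ∑ t, q t = 1) :
    ∀ N : ℕ, ∑ v : Fin N → T, F (∏ i, q (v i)) = N * ∑ t, F (q t) := by
  intro N
  induction N with
  | zero => simp [F]
  | succ n ih =>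
    have hsum1 : ∑ w : Fin n → T, ∏ i, q (w i) = 1 := by
      rw [blk_sum, hq.2]; simp
    rw [← Equiv.sum_comp (Fin.consEquiv (fun _ : Fin (n+1) => T)) (fun v => F (∏ i, q (v i)))]
    have happ : ∀ t : T × (Fin n → T),
        (∏ i, q (Fin.consEquiv (fun _ : Fin (n+1) => T) t i)) = q t.1 * ∏ i, q (t.2 i) := by
      intro t
      rw [Fin.prod_univ_succ]
      simp [Fin.consEquiv]
    calc ∑ t : T × (Fin n → T), F (∏ i, q (Fin.consEquiv (fun _ : Fin (n+1) => T) t i))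
        = ∑ t : T × (Fin n → T), ((∏ i, q (t.2 i)) * F (q t.1) + q t.1 * F (∏ i, q (t.2 i))) := by
          refine Finset.sum_congr rfl fun t _ => ?_
          rw [happ, F_mul]
      _ = (∑ w : Fin n → T, ∏ i, q (w i)) * (∑ t, F (q t))
          + (∑ t, q t) * ∑ w : Fin n → T, F (∏ i, q (w i)) := by
          rw [Fintype.sum_prod_type]
          have hrow : ∀ t : T,
              (∑ w : Fin n → T, ((∏ i, q (w i)) * F (q t) + q t * F (∏ i, q (w i))))
              = (∑ w : Fin n → T, ∏ i, q (w i)) * F (q t)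
                + q t * ∑ w : Fin n → T, F (∏ i, q (w i)) := by
            intro t
            rw [Finset.sum_add_distrib, Finset.sum_mul, Finset.mul_sum]
          rw [Finset.sum_congr rfl fun t _ => hrow t, Finset.sum_add_distrib,
            ← Finset.mul_sum, ← Finset.sum_mul]
      _ = (n + 1 : ℕ) * ∑ t, F (q t) := by
          rw [hsum1, hq.2, ih]; push_cast; ring

lemma H_blk {S T : Type*} [Fintype S] [Fintype T] {p : S → ℝ} (hp : IsPMF p) (g : S → T)
    (N : ℕ) : H (blk N p) (fun ω => fun i => g (ω i)) = N * H p g := by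
  rw [H_eq]
  calc ∑ v : Fin N → T, F (pr (blk N p) (fun ω => fun i => g (ω i)) v)
      = ∑ v : Fin N → T, F (∏ i, pr p g (v i)) :=
        Finset.sum_congr rfl fun v _ => by rw [pr_blk]
    _ = N * ∑ t, F (pr p g t) :=
        sum_F_prod ⟨pr_nonneg p hp.1 g, sum_pr_one hp g⟩ N
    _ = N * H p g := by rw [H_eq]


lemma ssa [Fintype α] [Fintype β] [Fintype γ] (p : Ω → ℝ) (hp : IsPMF p)
    (X : Ω → α) (Y : Ω → β) (Z : Ω → γ) :
    H p (fun ω => (X ω, Y ω, Z ω)) + H p Y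
      ≤ H p (fun ω => (X ω, Y ω)) + H p (fun ω => (Y ω, Z ω)) := by
  classical
  set r : α × β × γ → ℝ := pr p (fun ω => (X ω, Y ω, Z ω)) with hrdef
  set rXY : α × β → ℝ := pr p (fun ω => (X ω, Y ω)) with hXYdef
  set rYZ : β × γ → ℝ := pr p (fun ω => (Y ω, Z ω)) with hYZdef
  set rY : β → ℝ := pr p Y with hYdef
  have hgpack : Function.Injective (fun t : (α × β) × γ => (t.1.1, t.1.2, t.2)) := by
    intro s t h
    simp only [Prod.mk.injEq] at h
    obtain ⟨h1, h2, h3⟩ := h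
    exact Prod.ext (Prod.ext h1 h2) h3
  have hr_pack : ∀ (x : α) (y : β) (z : γ),
      r (x, y, z) = pr p (fun ω => ((X ω, Y ω), Z ω)) ((x, y), z) := by
    intro x y z
    rw [hrdef]
    have h := pr_comp p hgpack (fun ω => ((X ω, Y ω), Z ω)) ((x, y), z)
    exact h
  have mZ : ∀ (x : α) (y : β), ∑ z, r (x, y, z) = rXY (x, y) := by
    intro x y
    rw [hXYdef]
    calc ∑ z, r (x, y, z)
        = ∑ z, pr p (fun ω => ((X ω, Y ω), Z ω)) ((x, y), z) :=
          Finset.sum_congr rfl fun z _ => hr_pack x y z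
      _ = pr p (fun ω => (X ω, Y ω)) (x, y) := marg_right p (fun ω => (X ω, Y ω)) Z (x, y)
  have mX : ∀ w : β × γ, ∑ x, r (x, w) = rYZ w := by
    intro w
    rw [hrdef, hYZdef]
    exact marg_left p X (fun ω => (Y ω, Z ω)) w
  have mXY_Y : ∀ y : β, ∑ x, rXY (x, y) = rY y := by
    intro y; rw [hXYdef, hYdef]; exact marg_left p X Y y
  have mYZ_Y : ∀ y : β, ∑ z, rYZ (y, z) = rY y := by
    intro y; rw [hYZdef, hYdef]; exact marg_right p Y Z y
  have hr0 : ∀ t, 0 ≤ r t := fun t => by rw [hrdef]; exact pr_nonneg p hp.1 _ _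
  have hXY0 : ∀ s : α × β, 0 ≤ rXY s := fun s => by rw [hXYdef]; exact pr_nonneg p hp.1 _ _
  have hYZ0 : ∀ s : β × γ, 0 ≤ rYZ s := fun s => by rw [hYZdef]; exact pr_nonneg p hp.1 _ _
  have hY0 : ∀ y : β, 0 ≤ rY y := fun y => by rw [hYdef]; exact pr_nonneg p hp.1 _ _
  have hb1 : ∀ t : α × β × γ, r t ≤ rXY (t.1, t.2.1) := by
    rintro ⟨x, y, z⟩
    rw [← mZ x y]
    exact Finset.single_le_sum (f := fun z => r (x, y, z)) (fun z _ => hr0 _)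
      (Finset.mem_univ z)
  have hb2 : ∀ t : α × β × γ, r t ≤ rYZ t.2 := by
    rintro ⟨x, w⟩
    rw [← mX w]
    exact Finset.single_le_sum (f := fun x => r (x, w)) (fun x _ => hr0 _)
      (Finset.mem_univ x)
  have hb3 : ∀ (x : α) (y : β), rXY (x, y) ≤ rY y := by
    intro x y
    rw [← mXY_Y y]
    exact Finset.single_le_sum (f := fun x => rXY (x, y)) (fun x _ => hXY0 _)
      (Finset.mem_univ x)
  set q : α × β × γ → ℝ :=
    fun t => if rY t.2.1 = 0 then 0 else rXY (t.1, t.2.1) * rYZ t.2 / rY t.2.1 with hqdef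
  have hsupp : ∀ t : α × β × γ, 0 < r t →
      0 < rXY (t.1, t.2.1) ∧ 0 < rYZ t.2 ∧ 0 < rY t.2.1 := by
    intro t ht
    have h1 : 0 < rXY (t.1, t.2.1) := lt_of_lt_of_le ht (hb1 t)
    have h2 : 0 < rYZ t.2 := lt_of_lt_of_le ht (hb2 t)
    exact ⟨h1, h2, lt_of_lt_of_le h1 (hb3 t.1 t.2.1)⟩
  have hq0 : ∀ t, 0 ≤ q t := by
    intro t; rw [hqdef]; dsimp only
    split_ifs
    · exact le_rfl
    · exact div_nonneg (mul_nonneg (hXY0 _) (hYZ0 _)) (hY0 _)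
  have hq1 : ∑ t, q t ≤ 1 := by
    have hy : ∀ y : β, (∑ x, ∑ z, q (x, y, z)) ≤ rY y := by
      intro y
      by_cases hy0 : rY y = 0
      · have : ∀ x z, q (x, y, z) = 0 := by
          intro x z; rw [hqdef]; exact if_pos hy0
        calc ∑ x, ∑ z, q (x, y, z) = 0 := by
              simp only [this, Finset.sum_const_zero]
          _ ≤ rY y := hY0 y
      · have hqv : ∀ (x : α) (z : γ), q (x, y, z) = rXY (x, y) * rYZ (y, z) / rY y := by
          intro x z; rw [hqdef]; exact if_neg hy0
        refine le_of_eq ?_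
        calc ∑ x, ∑ z, q (x, y, z)
            = ∑ x, rXY (x, y) * (∑ z, rYZ (y, z)) / rY y := by
              refine Finset.sum_congr rfl fun x _ => ?_
              rw [Finset.mul_sum, Finset.sum_div]
              exact Finset.sum_congr rfl fun z _ => hqv x z
          _ = ∑ x, rXY (x, y) := by
              refine Finset.sum_congr rfl fun x _ => ?_
              rw [mYZ_Y y, mul_div_assoc, div_self hy0, mul_one]
          _ = rY y := mXY_Y y
    calc ∑ t : α × β × γ, q t = ∑ x, ∑ y, ∑ z, q (x, y, z) := by
          rw [Fintype.sum_prod_type]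
          exact Finset.sum_congr rfl fun x _ =>
            Fintype.sum_prod_type (f := fun w : β × γ => q (x, w))
      _ = ∑ y, ∑ x, ∑ z, q (x, y, z) := Finset.sum_comm
      _ ≤ ∑ y, rY y := Finset.sum_le_sum fun y _ => hy y
      _ = 1 := by rw [hYdef]; exact sum_pr_one hp Y
  have hg := gibbs r q hr0 (by rw [hrdef]; exact sum_pr_one hp _) hq0 hq1
    (fun t ht => by
      obtain ⟨h1, h2, h3⟩ := hsupp t ht
      rw [hqdef]; dsimp only
      rw [if_neg h3.ne']
      exact div_pos (mul_pos h1 h2) h3)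
  have hsplit : ∑ t : α × β × γ, -(r t * Real.logb 2 (q t))
      = ((∑ t : α × β × γ, -(r t * Real.logb 2 (rXY (t.1, t.2.1))))
        + ∑ t : α × β × γ, -(r t * Real.logb 2 (rYZ t.2)))
        + ∑ t : α × β × γ, r t * Real.logb 2 (rY t.2.1) := by
    rw [← Finset.sum_add_distrib, ← Finset.sum_add_distrib]
    refine Finset.sum_congr rfl fun t _ => ?_
    rcases eq_or_lt_of_le (hr0 t) with h | h
    · rw [← h]; ring
    · obtain ⟨h1, h2, h3⟩ := hsupp t h
      rw [hqdef]
      dsimp only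
      rw [if_neg h3.ne', Real.logb_div (mul_pos h1 h2).ne' h3.ne',
        Real.logb_mul h1.ne' h2.ne']
      ring
  have hS1 : ∑ t : α × β × γ, -(r t * Real.logb 2 (rXY (t.1, t.2.1)))
      = H p (fun ω => (X ω, Y ω)) := by
    rw [H_eq, ← hXYdef, Fintype.sum_prod_type, Fintype.sum_prod_type]
    refine Finset.sum_congr rfl fun x _ => ?_
    rw [Fintype.sum_prod_type]
    refine Finset.sum_congr rfl fun y _ => ?_
    rw [show (∑ z, -(r (x, y, z) * Real.logb 2 (rXY (x, y))))
        = -((∑ z, r (x, y, z)) * Real.logb 2 (rXY (x, y))) by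
      rw [Finset.sum_mul, ← Finset.sum_neg_distrib]]
    rw [mZ x y]
    rfl
  have hS2 : ∑ t : α × β × γ, -(r t * Real.logb 2 (rYZ t.2))
      = H p (fun ω => (Y ω, Z ω)) := by
    rw [H_eq, ← hYZdef, Fintype.sum_prod_type_right]
    refine Finset.sum_congr rfl fun w _ => ?_
    rw [show (∑ x, -(r (x, w) * Real.logb 2 (rYZ w)))
        = -((∑ x, r (x, w)) * Real.logb 2 (rYZ w)) by
      rw [Finset.sum_mul, ← Finset.sum_neg_distrib]]
    rw [mX w]
    rfl
  have hS3 : ∑ t : α × β × γ, r t * Real.logb 2 (rY t.2.1) = -H p Y := by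
    rw [H_eq, ← hYdef]
    have : ∑ t : α × β × γ, r t * Real.logb 2 (rY t.2.1)
        = ∑ y, ∑ x, ∑ z, r (x, y, z) * Real.logb 2 (rY y) := by
      rw [Fintype.sum_prod_type]
      rw [Finset.sum_congr rfl fun x (_ : x ∈ Finset.univ) =>
        (Fintype.sum_prod_type (f := fun w : β × γ => r (x, w) * Real.logb 2 (rY w.1)))]
      exact Finset.sum_comm
    rw [this, ← Finset.sum_neg_distrib]
    refine Finset.sum_congr rfl fun y _ => ?_
    have hrow : ∑ x, ∑ z, r (x, y, z) * Real.logb 2 (rY y)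
        = (∑ x, ∑ z, r (x, y, z)) * Real.logb 2 (rY y) := by
      rw [Finset.sum_mul]
      refine Finset.sum_congr rfl fun x _ => ?_
      rw [Finset.sum_mul]
    have hcol : ∑ x, ∑ z, r (x, y, z) = rY y := by
      rw [Finset.sum_congr rfl fun x (_ : x ∈ Finset.univ) => mZ x y, mXY_Y y]
    rw [hrow, hcol]
    show rY y * Real.logb 2 (rY y) = -F (rY y)
    rw [F]; ring
  have hfin : H p (fun ω => (X ω, Y ω, Z ω)) = ∑ t : α × β × γ, F (r t) := by
    rw [H_eq, hrdef]
  rw [hfin]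
  have := hg.trans (le_of_eq hsplit)
  rw [hS1, hS2, hS3] at this
  linarith

end SSWProof
open SSWProof


/-- Equivocation bound via Charlie's rate: for `(A_i, C_i, E_i)` i.i.d. `~ p`,
`J = f_A(A^N)` and `K = f_C(C^N)`, one has
`H(A^N | J, E^N) + N·H(C|A) ≤ H(A^N, C^N | J, K) + H(K)`. -/
theorem equivocation_bound_charlie_rate {𝒜 𝒞 ℰ κJ κK : Type}
    [Fintype 𝒜] [Fintype 𝒞] [Fintype ℰ] [Fintype κJ] [Fintype κK]
    (p : 𝒜 × 𝒞 × ℰ → ℝ) (hp : IsPMF p) (N : ℕ)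
    (fA : (Fin N → 𝒜) → κJ) (fC : (Fin N → 𝒞) → κK) :
    Hc (blk N p) (fun ω => (fun i => (ω i).1))
        (fun ω => (fA (fun i => (ω i).1), fun i => (ω i).2.2)) +
      N * Hc p (fun x => x.2.1) (fun x => x.1) ≤
    Hc (blk N p) (fun ω => ((fun i => (ω i).1), (fun i => (ω i).2.1)))
        (fun ω => (fA (fun i => (ω i).1), fC (fun i => (ω i).2.1))) +
      H (blk N p) (fun ω => fC (fun i => (ω i).2.1)) := by
  have hP : IsPMF (blk N p) := blk_pmf hp N
  have e1 : H (blk N p) (fun ω => ((fun i => (ω i).1),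
        (fA (fun i => (ω i).1), fun i => (ω i).2.2)))
      + H (blk N p) (fun ω => fA (fun i => (ω i).1))
      ≤ H (blk N p) (fun ω => ((fun i => (ω i).1), fA (fun i => (ω i).1)))
      + H (blk N p) (fun ω => (fA (fun i => (ω i).1), fun i => (ω i).2.2)) :=
    ssa (blk N p) hP (fun ω => fun i => (ω i).1) (fun ω => fA (fun i => (ω i).1))
      (fun ω => fun i => (ω i).2.2)
  have hg2 : Function.Injective (fun a : Fin N → 𝒜 => (a, fA a)) :=
    fun a b h => congrArg Prod.fst h
  have e2 : H (blk N p) (fun ω => ((fun i => (ω i).1), fA (fun i => (ω i).1)))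
      = H (blk N p) (fun ω => fun i => (ω i).1) :=
    H_comp (blk N p) hg2 (fun ω => fun i => (ω i).1)
  have e3 : H (blk N p) (fun ω => (fA (fun i => (ω i).1), fC (fun i => (ω i).2.1)))
      ≤ H (blk N p) (fun ω => fA (fun i => (ω i).1))
        + H (blk N p) (fun ω => fC (fun i => (ω i).2.1)) :=
    subadd (blk N p) hP (fun ω => fA (fun i => (ω i).1)) (fun ω => fC (fun i => (ω i).2.1))
  have hg4 : Function.Injective
      (fun ac : (Fin N → 𝒜) × (Fin N → 𝒞) => (ac, (fA ac.1, fC ac.2))) :=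
    fun a b h => congrArg Prod.fst h
  have e4 : H (blk N p) (fun ω => (((fun i => (ω i).1), (fun i => (ω i).2.1)),
        (fA (fun i => (ω i).1), fC (fun i => (ω i).2.1))))
      = H (blk N p) (fun ω => ((fun i => (ω i).1), (fun i => (ω i).2.1))) :=
    H_comp (blk N p) hg4 (fun ω => ((fun i => (ω i).1), (fun i => (ω i).2.1)))
  have hg5 : Function.Injective
      (fun v : Fin N → 𝒜 × 𝒞 => ((fun i => (v i).1 : Fin N → 𝒜), (fun i => (v i).2 : Fin N → 𝒞))) := by
    intro a b h
    funext i
    have h1 := congrFun (congrArg Prod.fst h) i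
    have h2 := congrFun (congrArg Prod.snd h) i
    exact Prod.ext h1 h2
  have e5 : H (blk N p) (fun ω => ((fun i => (ω i).1), (fun i => (ω i).2.1)))
      = H (blk N p) (fun ω => fun i => ((ω i).1, (ω i).2.1)) :=
    H_comp (blk N p) hg5 (fun ω => fun i => ((ω i).1, (ω i).2.1))
  have e6 : H (blk N p) (fun ω => fun i => ((ω i).1, (ω i).2.1))
      = N * H p (fun s => (s.1, s.2.1)) := H_blk hp (fun s => (s.1, s.2.1)) N
  have e7 : H (blk N p) (fun ω => fun i => (ω i).1)
      = N * H p (fun s => s.1) := H_blk hp (fun s => s.1) N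
  have e8 : H p (fun s : 𝒜 × 𝒞 × ℰ => (s.2.1, s.1)) = H p (fun s => (s.1, s.2.1)) :=
    H_comp p Prod.swap_injective (fun s => (s.1, s.2.1))
  have e9 : (N : ℝ) * (H p (fun s : 𝒜 × 𝒞 × ℰ => (s.2.1, s.1)) - H p (fun s => s.1))
      = H (blk N p) (fun ω => ((fun i => (ω i).1), (fun i => (ω i).2.1)))
        - H (blk N p) (fun ω => fun i => (ω i).1) := by
    rw [e8, mul_sub, ← e6, ← e7, ← e5]
  have key : H (blk N p) (fun ω => ((fun i => (ω i).1),
        (fA (fun i => (ω i).1), fun i => (ω i).2.2)))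
      - H (blk N p) (fun ω => (fA (fun i => (ω i).1), fun i => (ω i).2.2))
      + (N : ℝ) * (H p (fun s : 𝒜 × 𝒞 × ℰ => (s.2.1, s.1)) - H p (fun s => s.1))
      ≤ H (blk N p) (fun ω => (((fun i => (ω i).1), (fun i => (ω i).2.1)),
          (fA (fun i => (ω i).1), fC (fun i => (ω i).2.1))))
        - H (blk N p) (fun ω => (fA (fun i => (ω i).1), fC (fun i => (ω i).2.1)))
        + H (blk N p) (fun ω => fC (fun i => (ω i).2.1)) := by
    linarith [e1, e2, e3, e4, e9]
  exact key
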